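/- Let u : {0,1}² × {0,1}² → ℝ be the payoff function given (with rows and columns indexed by 00,01,10,11) by the matrix [[1,½,½,−1],[−½,0,0,−½],[−½,0,0,−½],[−1,½,½,1]]. Then the associated two-team game has no weak pure Nash equilibrium: for every corner (x,y) ∈ {0,1}² × {0,1}², either there exists i ∈ {1,2} with u(x,y) < u(x̄ⁱ,y), or there exists j ∈ {1,2} with u(x,y) > u(x,ȳʲ). -/
import Mathlib


noncomputable section

/-- `x` with its `i`-th bit flipped. -/
def bflip {n : ℕ} (x : Fin n → Bool) (i : Fin n) : Fin n → Bool :=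
  Function.update x i (!x i)

/-- The payoff function of the four-gene game, given (with rows and columns
indexed by `00,01,10,11`) by the matrix
`[[1,½,½,−1],[−½,0,0,−½],[−½,0,0,−½],[−1,½,½,1]]`. -/
def gameU (x y : Fin 2 → Bool) : ℝ :=
  if x 0 = x 1 then
    (if y 0 = y 1 then (if x 0 = y 0 then 1 else -1) else 1/2)
  else
    (if y 0 = y 1 then -(1/2) else 0)

/-- The four-gene game has no weak pure Nash equilibrium:
at every corner `(x,y)`, either some player of team A strictly gains by
flipping her bit, or some player of team B strictly gains by flipping hers. -/
theorem stmt19 :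
    ∀ (x y : Fin 2 → Bool),
      (∃ i : Fin 2, gameU x y < gameU (bflip x i) y) ∨
      (∃ j : Fin 2, gameU x (bflip y j) < gameU x y) := by
  intro x y
  rcases Bool.eq_false_or_eq_true (x 0) with h0 | h0 <;>
  rcases Bool.eq_false_or_eq_true (x 1) with h1 | h1 <;>
  rcases Bool.eq_false_or_eq_true (y 0) with h2 | h2 <;>
  rcases Bool.eq_false_or_eq_true (y 1) with h3 | h3 <;>
  simp [gameU, bflip, Function.update_apply, Fin.exists_fin_two, h0, h1, h2, h3] <;>
  norm_num
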